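/- arXiv:1404.5238 — 2 statements merged into one kernel-verified Lean document; each statement's English description precedes it below -/
import Mathlib

section
/- Let π_X be a π_A-representation of a Hilbert A-module X on Krein B-modules (H₁, J₁) and (H₂, J₂), i.e., π_X : X → L(H₁, H₂) and π_A : A → L(H₁) is a representation with π_X(x)^# π_X(y) = π_A(⟨x,y⟩) for all x, y ∈ X, where T^# = J₁ T* J₂. If the closed linear span of π_X(X) H₁ equals H₂, then π_X(x a) = π_X(x) π_A(a) for all x ∈ X and a ∈ A. -/
/-- The Hilbert C⋆-module class as it stood in Mathlib (Dec 2024): a right `A`-module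
(action of `Aᵐᵒᵖ`) with an `A`-valued inner product, `A`-linear on the right. -/
class RightCStarModule (A E : Type*) [NonUnitalSemiring A] [StarRing A]
    [Module ℂ A] [AddCommGroup E] [Module ℂ E] [PartialOrder A] [SMul Aᵐᵒᵖ E] [Norm A] [Norm E]
    extends Inner A E where
  inner_add_right {x} {y} {z} : inner x (y + z) = inner x y + inner x z
  inner_self_nonneg {x} : 0 ≤ inner x x
  inner_self {x} : inner x x = 0 ↔ x = 0
  inner_op_smul_right {a : A} {x y : E} : inner x (MulOpposite.op a • y) = inner x y * a
  inner_smul_right_complex {z : ℂ} {x} {y} : inner x (z • y) = z • inner x y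
  star_inner x y : star (inner x y) = inner y x
  norm_eq_sqrt_norm_inner_self x : ‖x‖ = √‖inner x x‖

namespace RightCStarModule

section general

variable {A E : Type*} [NonUnitalRing A] [StarRing A] [AddCommGroup E] [Module ℂ A]
  [Module ℂ E] [PartialOrder A] [SMul Aᵐᵒᵖ E] [Norm A] [Norm E] [RightCStarModule A E]

lemma inner_op_smul_left' {a : A} {x y : E} :
    inner A (MulOpposite.op a • x) y = star a * inner A x y := by
  rw [← star_inner, inner_op_smul_right, star_mul, star_inner]

lemma inner_sub_right' {x y z : E} : inner A x (y - z) = inner A x y - inner A x z := by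
  apply eq_sub_of_add_eq
  rw [← inner_add_right, sub_add_cancel]

lemma inner_sub_left' {x y z : E} : inner A (x - y) z = inner A x z - inner A y z := by
  rw [← star_inner, inner_sub_right', star_sub, star_inner, star_inner]

end general

section cont

variable {A E : Type*} [CStarAlgebra A] [PartialOrder A] [StarOrderedRing A]
  [NormedAddCommGroup E] [NormedSpace ℂ E] [SMul Aᵐᵒᵖ E] [RightCStarModule A E]

/-- The opposite-algebra left Hilbert module structure. -/
noncomputable def toOpCStarModule : CStarModule Aᵐᵒᵖ E where
  inner x y := MulOpposite.op (inner A x y)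
  inner_add_right := by
    intro x y z
    simp only [inner_add_right, MulOpposite.op_add]
  inner_self_nonneg := by
    intro x
    show (0 : A) ≤ inner A x x
    exact inner_self_nonneg
  inner_self := by
    intro x
    rw [MulOpposite.op_eq_zero_iff]
    exact inner_self
  inner_op_smul_right := by
    intro a x y
    rw [← MulOpposite.op_unop a, inner_op_smul_right, MulOpposite.op_mul]
  inner_smul_right_complex := by
    intro z x y
    rw [inner_smul_right_complex, MulOpposite.op_smul]
  star_inner := by
    intro x y
    rw [← MulOpposite.op_star, star_inner]
  norm_eq_sqrt_norm_inner_self := by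
    intro x
    exact norm_eq_sqrt_norm_inner_self x

/-- `y ↦ ⟪v, y⟫` as a continuous linear map. -/
noncomputable def rInnerSL (v : E) : E →L[ℂ] A :=
  LinearMap.mkContinuous
    { toFun := fun y => inner A v y
      map_add' := fun y z => inner_add_right
      map_smul' := fun z y => inner_smul_right_complex }
    ‖v‖ (fun y => by
      letI := (toOpCStarModule : CStarModule Aᵐᵒᵖ E)
      exact CStarModule.norm_inner_le (A := Aᵐᵒᵖ) E (x := v) (y := y))

lemma rInnerSL_apply {v y : E} : rInnerSL (A := A) v y = inner A v y := rfl

end cont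

end RightCStarModule

/-- If `π_X` is a nondegenerate `π_A`-representation of a Hilbert `A`-module `X` on
Krein `B`-modules `(H₁,J₁)` and `(H₂,J₂)` (i.e. `π_X(x)^# π_X(y) = π_A ⟨x,y⟩` with
`T^# = J₁ T* J₂`, and the span of `π_X(X) H₁` is dense in `H₂`), then
`π_X (x a) = π_X x ∘ π_A a` for all `x : X`, `a : A`. -/
theorem piX_module_map_of_nondegenerate
    {A B X H₁ H₂ : Type*}
    [CStarAlgebra A] [PartialOrder A] [StarOrderedRing A]
    [CStarAlgebra B] [PartialOrder B] [StarOrderedRing B]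
    [NormedAddCommGroup X] [NormedSpace ℂ X] [SMul Aᵐᵒᵖ X] [RightCStarModule A X]
    [NormedAddCommGroup H₁] [NormedSpace ℂ H₁] [SMul Bᵐᵒᵖ H₁] [RightCStarModule B H₁]
    [NormedAddCommGroup H₂] [NormedSpace ℂ H₂] [SMul Bᵐᵒᵖ H₂] [RightCStarModule B H₂]
    (J₁ : H₁ →L[ℂ] H₁) (J₂ : H₂ →L[ℂ] H₂)
    (hJ₁sym : ∀ x y : H₁, (inner B (J₁ x) y : B) = inner B x (J₁ y))
    (hJ₂sym : ∀ x y : H₂, (inner B (J₂ x) y : B) = inner B x (J₂ y))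
    (hJ₁2 : ∀ x : H₁, J₁ (J₁ x) = x) (hJ₂2 : ∀ x : H₂, J₂ (J₂ x) = x)
    (πA : A → H₁ →L[ℂ] H₁) (πAadj : A → H₁ →L[ℂ] H₁)
    (hπAadj : ∀ (a : A) (ξ η : H₁), (inner B (πA a ξ) η : B) = inner B ξ (πAadj a η))
    (hπAmul : ∀ a b : A, πA (a * b) = πA a ∘L πA b)
    (hπAstar : ∀ a : A, πA (star a) = J₁ ∘L πAadj a ∘L J₁)
    (πX : X → H₁ →L[ℂ] H₂) (πXadj : X → H₂ →L[ℂ] H₁)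
    (hπXadj : ∀ (x : X) (ξ : H₁) (η : H₂),
      (inner B (πX x ξ) η : B) = inner B ξ (πXadj x η))
    (hrel : ∀ x y : X, (J₁ ∘L πXadj x ∘L J₂) ∘L πX y = πA (inner A x y))
    (hdense : (Submodule.span ℂ {ζ : H₂ | ∃ (x : X) (ξ : H₁),
      ζ = πX x ξ}).topologicalClosure = ⊤) :
    ∀ (x : X) (a : A), πX (MulOpposite.op a • x) = πX x ∘L πA a := by
  intro x a
  ext ζ
  simp only [ContinuousLinearMap.comp_apply]
  set v : H₂ := πX (MulOpposite.op a • x) ζ - πX x (πA a ζ) with hv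
  have hr : ∀ (z y : X) (ξ : H₁), πXadj z (J₂ (πX y ξ)) = J₁ (πA (inner A z y) ξ) := by
    intro z y ξ
    have h := congrFun (congrArg DFunLike.coe (hrel z y)) ξ
    simp only [ContinuousLinearMap.comp_apply] at h
    have h2 := congrArg J₁ h
    rwa [hJ₁2] at h2
  have key : ∀ (y : X) (ξ : H₁), (inner B v (J₂ (πX y ξ)) : B) = 0 := by
    intro y ξ
    have h1 : (inner B (πX (MulOpposite.op a • x) ζ) (J₂ (πX y ξ)) : B)
        = inner B ζ (πAadj a (J₁ (πA (inner A x y) ξ))) := by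
      rw [hπXadj, hr]
      have : (inner A (MulOpposite.op a • x) y : A) = star a * inner A x y :=
        RightCStarModule.inner_op_smul_left'
      rw [this, hπAmul, hπAstar]
      simp only [ContinuousLinearMap.comp_apply, hJ₁2]
    have h2 : (inner B (πX x (πA a ζ)) (J₂ (πX y ξ)) : B)
        = inner B ζ (πAadj a (J₁ (πA (inner A x y) ξ))) := by
      rw [hπXadj, hr, hπAadj]
    rw [hv, RightCStarModule.inner_sub_left', h1, h2, sub_self]
  have hall : ∀ η : H₂, (inner B v η : B) = 0 := by
    set g : H₂ →L[ℂ] B := (RightCStarModule.rInnerSL (A := B) v).comp J₂ with hg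
    have hker : (Submodule.span ℂ {ζ' : H₂ | ∃ (x : X) (ξ : H₁),
        ζ' = πX x ξ}).topologicalClosure ≤ LinearMap.ker (g : H₂ →ₗ[ℂ] B) := by
      apply Submodule.topologicalClosure_minimal
      · rw [Submodule.span_le]
        rintro _ ⟨y, ξ, rfl⟩
        simpa [hg, RightCStarModule.rInnerSL_apply] using key y ξ
      · exact ContinuousLinearMap.isClosed_ker g
    intro η
    have hmem : J₂ η ∈ LinearMap.ker (g : H₂ →ₗ[ℂ] B) := hker (by rw [hdense]; trivial)
    have := LinearMap.mem_ker.mp hmem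
    simpa [hg, RightCStarModule.rInnerSL_apply, hJ₂2] using this
  have hv0 : v = 0 := RightCStarModule.inner_self.mp (hall v)
  rw [hv] at hv0
  exact sub_eq_zero.mp hv0
end

section
/- Let Φ : X → L(H₁,H₂) be a (u′,u)-covariant φ-map with respect to an action η of a locally compact group G, where u is simultaneously unitary and pseudo-unitary on the Krein space (H₁,J₁). Then in the KSGNS construction (with K₁ the completion of (A ⊗ H₁)/N_φ), for each t ∈ G the formula v_t(a ⊗ ξ + N_φ) = β^η_t(a) ⊗ u_t(ξ) + N_φ defines a well-defined operator v_t on K₁ which is simultaneously unitary and pseudo-unitary with respect to J₃, the map t ↦ v_t is a group homomorphism, and V_Φ u_t = v_t V_Φ for all t ∈ G. -/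
open ContinuousLinearMap in
/-- Lemma 3.4 of the paper: for a `(u',u)`-covariant `φ`-map, with `u` simultaneously
unitary and pseudo-unitary on the Krein space `(H₁,J₁)`, the formula
`v_t (a ⊗ ξ + N_φ) = β_t(a) ⊗ u_t ξ + N_φ` defines a simultaneously unitary and
pseudo-unitary representation `v` of `G` on the KSGNS space `(K₁,J₃)` satisfying
`V_Φ u_t = v_t V_Φ`. -/
theorem covariant_ksgns_unitary_v
    {G A H₁ K₁ : Type*} [Group G]
    [CStarAlgebra A] [PartialOrder A] [StarOrderedRing A]
    [NormedAddCommGroup H₁] [InnerProductSpace ℂ H₁] [CompleteSpace H₁]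
    [NormedAddCommGroup K₁] [InnerProductSpace ℂ K₁] [CompleteSpace K₁]
    (α : A ≃⋆ₐ[ℂ] A) (hα : ∀ a : A, α (α a) = a)
    (J₁ : H₁ →L[ℂ] H₁) (hJ₁sa : adjoint J₁ = J₁)
    (hJ₁2 : J₁ ∘L J₁ = ContinuousLinearMap.id ℂ H₁)
    -- the induced action `β` of `G` on `A`, commuting with `α`
    (β : G → A → A)
    (hβ1 : ∀ a : A, β 1 a = a)
    (hβmul : ∀ (t s : G) (a : A), β (t * s) a = β t (β s a))
    (hβring : ∀ t : G, ∀ a b : A, β t (a * b) = β t a * β t b)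
    (hβstar : ∀ (t : G) (a : A), β t (star a) = star (β t a))
    (hβα : ∀ (t : G) (a : A), β t (α a) = α (β t a))
    -- `u` is simultaneously unitary and pseudo-unitary on `(H₁,J₁)`
    (u : G → H₁ →L[ℂ] H₁)
    (hu1 : u 1 = ContinuousLinearMap.id ℂ H₁)
    (humul : ∀ t s : G, u (t * s) = u t ∘L u s)
    (huunit : ∀ t : G, adjoint (u t) ∘L u t = ContinuousLinearMap.id ℂ H₁ ∧
      u t ∘L adjoint (u t) = ContinuousLinearMap.id ℂ H₁)
    (huJ : ∀ t : G, J₁ ∘L u t = u t ∘L J₁)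
    -- the `α`-CP map `φ`, which is `u`-covariant with respect to `β`
    (φ : A →ₗ[ℂ] H₁ →L[ℂ] H₁)
    (hφcov : ∀ (t : G) (a : A), φ (β t a) = u t ∘L φ a ∘L adjoint (u t))
    -- the KSGNS space `K₁`, presented by `ι a ξ = a ⊗ ξ + N_φ`
    (ι : A → H₁ → K₁)
    (hadd₁ : ∀ (a b : A) (ξ : H₁), ι (a + b) ξ = ι a ξ + ι b ξ)
    (hadd₂ : ∀ (a : A) (ξ η : H₁), ι a (ξ + η) = ι a ξ + ι a η)
    (hsmul : ∀ (c : ℂ) (a : A) (ξ : H₁), ι (c • a) ξ = c • ι a ξ)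
    (hι : ∀ (a b : A) (ξ η : H₁),
      (inner ℂ (ι a ξ) (ι b η) : ℂ) = inner ℂ ξ (φ (star (α a) * b) η))
    (hdense : (Submodule.span ℂ {v : K₁ | ∃ (a : A) (ξ : H₁),
      v = ι a ξ}).topologicalClosure = ⊤)
    (J₃ : K₁ →L[ℂ] K₁)
    (hJ₃ι : ∀ (a : A) (ξ : H₁), J₃ (ι a ξ) = ι (α a) (J₁ ξ))
    (V : H₁ →L[ℂ] K₁) (hV : ∀ ξ : H₁, V ξ = ι 1 (J₁ ξ)) :
    ∃ v : G → K₁ →L[ℂ] K₁,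
      (∀ (t : G) (a : A) (ξ : H₁), v t (ι a ξ) = ι (β t a) (u t ξ)) ∧
      (v 1 = ContinuousLinearMap.id ℂ K₁) ∧
      (∀ t s : G, v (t * s) = v t ∘L v s) ∧
      (∀ t : G, adjoint (v t) ∘L v t = ContinuousLinearMap.id ℂ K₁ ∧
        v t ∘L adjoint (v t) = ContinuousLinearMap.id ℂ K₁) ∧
      (∀ t : G, v t⁻¹ = J₃ ∘L adjoint (v t) ∘L J₃) ∧
      (∀ (t : G) (ξ : H₁), V (u t ξ) = v t (V ξ)) := by
  classical
  set S : Set K₁ := {v : K₁ | ∃ (a : A) (ξ : H₁), v = ι a ξ} with hSdef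
  have hβone : ∀ t : G, β t 1 = 1 := by
    intro t
    have h1 : β t (β t⁻¹ (1 : A)) = 1 := by rw [← hβmul, mul_inv_cancel, hβ1]
    calc β t 1 = β t 1 * β t (β t⁻¹ 1) := by rw [h1, mul_one]
    _ = β t (1 * β t⁻¹ 1) := (hβring t 1 _).symm
    _ = 1 := by rw [one_mul, h1]
  have huu : ∀ (t : G) (ξ : H₁), adjoint (u t) (u t ξ) = ξ := by
    intro t ξ
    have := congrArg (fun (f : H₁ →L[ℂ] H₁) => f ξ) (huunit t).1
    simpa using this
  have hinneru : ∀ (t : G) (ξ η : H₁), (inner ℂ (u t ξ) (u t η) : ℂ) = inner ℂ ξ η := by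
    intro t ξ η
    rw [← ContinuousLinearMap.adjoint_inner_right, huu]
  have hJu : ∀ (t : G) (ξ : H₁), J₁ (u t ξ) = u t (J₁ ξ) := by
    intro t ξ
    have := congrArg (fun (f : H₁ →L[ℂ] H₁) => f ξ) (huJ t)
    simpa using this
  have hJJ : ∀ ξ : H₁, J₁ (J₁ ξ) = ξ := by
    intro ξ
    have := congrArg (fun (f : H₁ →L[ℂ] H₁) => f ξ) hJ₁2
    simpa using this
  have key : ∀ (t : G) (a b : A) (ξ η : H₁),
      (inner ℂ (ι (β t a) (u t ξ)) (ι (β t b) (u t η)) : ℂ) = inner ℂ (ι a ξ) (ι b η) := by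
    intro t a b ξ η
    rw [hι, hι]
    have h1 : star (α (β t a)) * β t b = β t (star (α a) * b) := by
      rw [← hβα, ← hβstar, ← hβring]
    rw [h1, hφcov]
    simp only [ContinuousLinearMap.comp_apply]
    rw [huu, hinneru]
  have ext_vec : ∀ z z' : K₁,
      (∀ (a : A) (ξ : H₁), (inner ℂ (ι a ξ) z : ℂ) = inner ℂ (ι a ξ) z') → z = z' := by
    intro z z' h
    have hker : Submodule.span ℂ S ≤ LinearMap.ker ((innerSL ℂ (z - z') : K₁ →ₗ[ℂ] ℂ)) := by
      rw [Submodule.span_le]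
      rintro x ⟨a, ξ, rfl⟩
      have h0 : (inner ℂ (ι a ξ) (z - z') : ℂ) = 0 := by
        rw [inner_sub_right, h a ξ, sub_self]
      have h0' : (inner ℂ (z - z') (ι a ξ) : ℂ) = 0 := by
        rw [← inner_conj_symm, h0, map_zero]
      exact LinearMap.mem_ker.mpr h0'
    have htop : (⊤ : Submodule ℂ K₁) ≤ LinearMap.ker ((innerSL ℂ (z - z') : K₁ →ₗ[ℂ] ℂ)) := by
      rw [← hdense]
      exact Submodule.topologicalClosure_minimal _ hker
        (ContinuousLinearMap.isClosed_ker _)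
    have h1 : (inner ℂ (z - z') (z - z') : ℂ) = 0 := htop Submodule.mem_top
    rw [inner_self_eq_zero] at h1
    exact sub_eq_zero.mp h1
  have ext_op : ∀ T T' : K₁ →L[ℂ] K₁,
      (∀ (a : A) (ξ : H₁), T (ι a ξ) = T' (ι a ξ)) → T = T' := by
    intro T T' h
    have hker : Submodule.span ℂ S ≤ LinearMap.ker ((T - T' : K₁ →L[ℂ] K₁) : K₁ →ₗ[ℂ] K₁) := by
      rw [Submodule.span_le]
      rintro x ⟨a, ξ, rfl⟩
      simp [LinearMap.mem_ker, h a ξ]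
    have htop : (⊤ : Submodule ℂ K₁) ≤ LinearMap.ker ((T - T' : K₁ →L[ℂ] K₁) : K₁ →ₗ[ℂ] K₁) := by
      rw [← hdense]
      exact Submodule.topologicalClosure_minimal _ hker
        (ContinuousLinearMap.isClosed_ker _)
    ext x
    have hx := htop (Submodule.mem_top : x ∈ (⊤ : Submodule ℂ K₁))
    simpa [LinearMap.mem_ker, sub_eq_zero] using hx
  have construct : ∀ t : G, ∃ w : K₁ →L[ℂ] K₁,
      ∀ (a : A) (ξ : H₁), w (ι a ξ) = ι (β t a) (u t ξ) := by
    intro t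
    set g₀ : A × H₁ → K₁ := fun p => ι p.1 p.2 with hg₀
    set g₁ : A × H₁ → K₁ := fun p => ι (β t p.1) (u t p.2) with hg₁
    set π : ((A × H₁) →₀ ℂ) →ₗ[ℂ] K₁ := Finsupp.linearCombination ℂ g₀ with hπ
    set π₁ : ((A × H₁) →₀ ℂ) →ₗ[ℂ] K₁ := Finsupp.linearCombination ℂ g₁ with hπ₁
    have keyp : ∀ p q : A × H₁, (inner ℂ (g₁ p) (g₁ q) : ℂ) = inner ℂ (g₀ p) (g₀ q) :=
      fun p q => key t _ _ _ _
    have key2 : ∀ f g : (A × H₁) →₀ ℂ,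
        (inner ℂ (π₁ f) (π₁ g) : ℂ) = inner ℂ (π f) (π g) := by
      intro f g
      simp only [hπ, hπ₁, Finsupp.linearCombination_apply, Finsupp.sum, sum_inner,
        inner_sum, inner_smul_left, inner_smul_right, keyp]
    have hkerππ : ∀ f, π f = 0 → π₁ f = 0 := by
      intro f hf
      have h1 : (inner ℂ (π₁ f) (π₁ f) : ℂ) = 0 := by rw [key2, hf, inner_zero_right]
      exact inner_self_eq_zero.mp h1
    have hnorm : ∀ f, ‖π₁ f‖ = ‖π f‖ := by
      intro f
      have h1 : (inner ℂ (π₁ f) (π₁ f) : ℂ) = inner ℂ (π f) (π f) := key2 f f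
      rw [inner_self_eq_norm_sq_to_K, inner_self_eq_norm_sq_to_K] at h1
      have h2 : (‖π₁ f‖ : ℝ) ^ 2 = (‖π f‖ : ℝ) ^ 2 := by exact_mod_cast h1
      have h3 := congrArg Real.sqrt h2
      rwa [Real.sqrt_sq (norm_nonneg _), Real.sqrt_sq (norm_nonneg _)] at h3
    have hrangeπ : LinearMap.range π = Submodule.span ℂ S := by
      rw [hπ, Finsupp.range_linearCombination]
      congr 1
      ext x
      constructor
      · rintro ⟨p, rfl⟩; exact ⟨p.1, p.2, rfl⟩
      · rintro ⟨a, ξ, rfl⟩; exact ⟨(a, ξ), rfl⟩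
    have hmem : ∀ f, π f ∈ Submodule.span ℂ S := by
      intro f
      rw [← hrangeπ]
      exact LinearMap.mem_range_self π f
    set p : ((A × H₁) →₀ ℂ) →ₗ[ℂ] (Submodule.span ℂ S) :=
      π.codRestrict (Submodule.span ℂ S) hmem with hp
    have hpval : ∀ f, (p f : K₁) = π f := fun f => rfl
    have hpsurj : LinearMap.range p = ⊤ := by
      rw [LinearMap.range_eq_top]
      intro d
      have hd : (d : K₁) ∈ LinearMap.range π := by rw [hrangeπ]; exact d.2
      obtain ⟨f, hf⟩ := hd
      exact ⟨f, Subtype.ext hf⟩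
    obtain ⟨σ, hσ⟩ := p.exists_rightInverse_of_surjective hpsurj
    set v₀ : (Submodule.span ℂ S) →ₗ[ℂ] K₁ := π₁ ∘ₗ σ with hv₀def
    have hv₀ : ∀ f, v₀ (p f) = π₁ f := by
      intro f
      have h1 : p (σ (p f) - f) = 0 := by
        rw [map_sub, ← LinearMap.comp_apply, hσ, LinearMap.id_apply, sub_self]
      have h2 : π (σ (p f) - f) = 0 := by
        have := congrArg Subtype.val h1
        simpa [hpval] using this
      have h3 := hkerππ _ h2
      rw [map_sub, sub_eq_zero] at h3
      simpa [hv₀def] using h3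
    have hbound : ∀ d : Submodule.span ℂ S, ‖v₀ d‖ = ‖d‖ := by
      intro d
      obtain ⟨f, rfl⟩ := LinearMap.range_eq_top.mp hpsurj d
      rw [hv₀, hnorm]
      have : ‖p f‖ = ‖(p f : K₁)‖ := rfl
      rw [this, hpval]
    have hdr : DenseRange ((Submodule.span ℂ S).subtypeL :
        Submodule.span ℂ S →L[ℂ] K₁) := by
      have hD : Dense ((Submodule.span ℂ S : Submodule ℂ K₁) : Set K₁) :=
        Submodule.dense_iff_topologicalClosure_eq_top.2 hdense
      simpa [DenseRange, Subtype.range_coe] using hD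
    have hui : IsUniformInducing ((Submodule.span ℂ S).subtypeL :
        Submodule.span ℂ S →L[ℂ] K₁) := isometry_subtype_coe.isUniformInducing
    set vc : (Submodule.span ℂ S) →L[ℂ] K₁ :=
      v₀.mkContinuous 1 (fun x => by rw [hbound, one_mul]) with hvc
    refine ⟨ContinuousLinearMap.extend vc (Submodule.span ℂ S).subtypeL,
      fun a ξ => ?_⟩
    have hmemS : ι a ξ ∈ Submodule.span ℂ S :=
      Submodule.subset_span ⟨a, ξ, rfl⟩
    have h1 : ContinuousLinearMap.extend vc (Submodule.span ℂ S).subtypeL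
        ((Submodule.span ℂ S).subtypeL ⟨ι a ξ, hmemS⟩) = vc ⟨ι a ξ, hmemS⟩ :=
      ContinuousLinearMap.extend_eq vc hdr hui _
    have h2 : (⟨ι a ξ, hmemS⟩ : Submodule.span ℂ S) = p (Finsupp.single (a, ξ) 1) := by
      apply Subtype.ext
      rw [hpval, hπ, Finsupp.linearCombination_single, one_smul]
    have h3 : vc ⟨ι a ξ, hmemS⟩ = ι (β t a) (u t ξ) := by
      have : vc ⟨ι a ξ, hmemS⟩ = v₀ ⟨ι a ξ, hmemS⟩ := rfl
      rw [this, h2, hv₀, hπ₁, Finsupp.linearCombination_single, one_smul]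
    simpa [h3] using h1
  choose v hv using construct
  have hv1 : v 1 = ContinuousLinearMap.id ℂ K₁ := by
    apply ext_op
    intro a ξ
    rw [hv, hβ1, hu1]
    rfl
  have hvmul : ∀ t s : G, v (t * s) = v t ∘L v s := by
    intro t s
    apply ext_op
    intro a ξ
    rw [hv, hβmul, humul]
    simp only [ContinuousLinearMap.comp_apply]
    rw [hv, hv]
  have hvadj : ∀ t : G, adjoint (v t) ∘L v t = ContinuousLinearMap.id ℂ K₁ := by
    intro t
    apply ext_op
    intro b η
    simp only [ContinuousLinearMap.comp_apply, ContinuousLinearMap.id_apply]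
    apply ext_vec
    intro a ξ
    rw [ContinuousLinearMap.adjoint_inner_right, hv, hv]
    exact key t a b ξ η
  have hadj2 : ∀ t : G, adjoint (v t) = v t⁻¹ := by
    intro t
    have hinv : v t ∘L v t⁻¹ = ContinuousLinearMap.id ℂ K₁ := by
      rw [← hvmul, mul_inv_cancel, hv1]
    calc adjoint (v t) = adjoint (v t) ∘L (v t ∘L v t⁻¹) := by
          rw [hinv, ContinuousLinearMap.comp_id]
    _ = (adjoint (v t) ∘L v t) ∘L v t⁻¹ := by rw [ContinuousLinearMap.comp_assoc]
    _ = v t⁻¹ := by rw [hvadj, ContinuousLinearMap.id_comp]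
  have hJ₃2 : J₃ ∘L J₃ = ContinuousLinearMap.id ℂ K₁ := by
    apply ext_op
    intro a ξ
    simp only [ContinuousLinearMap.comp_apply, ContinuousLinearMap.id_apply]
    rw [hJ₃ι, hJ₃ι, hα, hJJ]
  have hJcomm : ∀ t : G, J₃ ∘L v t = v t ∘L J₃ := by
    intro t
    apply ext_op
    intro a ξ
    simp only [ContinuousLinearMap.comp_apply]
    rw [hv, hJ₃ι, hJ₃ι, hv, hβα, hJu]
  refine ⟨v, hv, hv1, hvmul, fun t => ⟨hvadj t, ?_⟩, fun t => ?_, fun t ξ => ?_⟩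
  · rw [hadj2, ← hvmul, mul_inv_cancel, hv1]
  · rw [hadj2]
    calc v t⁻¹ = v t⁻¹ ∘L (J₃ ∘L J₃) := by rw [hJ₃2, ContinuousLinearMap.comp_id]
    _ = (v t⁻¹ ∘L J₃) ∘L J₃ := by rw [ContinuousLinearMap.comp_assoc]
    _ = (J₃ ∘L v t⁻¹) ∘L J₃ := by rw [hJcomm]
    _ = J₃ ∘L v t⁻¹ ∘L J₃ := by rw [ContinuousLinearMap.comp_assoc]
  · rw [hV, hV, hv, hβone, hJu]
end
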